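/- Let n ≥ 4 be even. If F_1 and F_2 are graphs on a common vertex set of size n, each of which is a Hamiltonian cycle (isomorphic to the cycle C_n), then the simultaneous domination number of F_1 and F_2 is at most n/2. Similarly, if each of F_1 and F_2 is a Hamiltonian path (isomorphic to the path P_n), then the simultaneous domination number of F_1 and F_2 is at most n/2. Furthermore, if n ≥ 5 is odd and each of F_1 and F_2 is isomorphic to the cycle C_n, then the simultaneous domination number of F_1 and F_2 is at most (n+1)/2. -/

import Mathlib

/-- The simultaneous domination number of factors `F 0, …, F (k-1)` on a common
finite vertex set: the minimum cardinality of a set `S` that is a dominating set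
in every factor. -/
noncomputable def simDomNum {V : Type*} [Fintype V] {k : ℕ}
    (F : Fin k → SimpleGraph V) : ℕ :=
  sInf {m | ∃ S : Finset V, (∀ i, ∀ v ∉ S, ∃ u ∈ S, (F i).Adj v u) ∧ S.card = m}

set_option linter.unusedSectionVars false

open Finset

namespace SDH
variable {V : Type*} [Fintype V]

variable {V : Type*} [Fintype V]

lemma conj1 (m₁ m₂ : Equiv.Perm V) (h₁ : ∀ v, m₁ (m₁ v) = v)
    (h₂ : ∀ v, m₂ (m₂ v) = v) (j : ℕ) (x : V) :
    ((m₂ * m₁) ^ j) (m₁ (((m₂ * m₁) ^ j) x)) = m₁ x := by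
  induction j with
  | zero => simp
  | succ j ih =>
    have base : ∀ y, (m₂ * m₁) (m₁ ((m₂ * m₁) y)) = m₁ y := by
      intro y; simp [Equiv.Perm.mul_apply, h₁, h₂]
    calc ((m₂ * m₁) ^ (j+1)) (m₁ (((m₂ * m₁) ^ (j+1)) x))
        = ((m₂ * m₁) ^ j) ((m₂ * m₁) (m₁ (((m₂ * m₁) ^ (j+1)) x))) := by
          rw [pow_succ]; simp [Equiv.Perm.mul_apply]
      _ = ((m₂ * m₁) ^ j) ((m₂ * m₁) (m₁ ((m₂ * m₁) (((m₂ * m₁) ^ j) x)))) := by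
          rw [pow_succ']; simp [Equiv.Perm.mul_apply]
      _ = ((m₂ * m₁) ^ j) (m₁ (((m₂ * m₁) ^ j) x)) := by rw [base]
      _ = m₁ x := ih

lemma conj2 (m₁ m₂ : Equiv.Perm V) (h₁ : ∀ v, m₁ (m₁ v) = v)
    (h₂ : ∀ v, m₂ (m₂ v) = v) (j : ℕ) (x : V) :
    ((m₂ * m₁) ^ j) (m₂ (((m₂ * m₁) ^ j) x)) = m₂ x := by
  induction j with
  | zero => simp
  | succ j ih =>
    have base : ∀ y, (m₂ * m₁) (m₂ ((m₂ * m₁) y)) = m₂ y := by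
      intro y; simp [Equiv.Perm.mul_apply, h₁, h₂]
    calc ((m₂ * m₁) ^ (j+1)) (m₂ (((m₂ * m₁) ^ (j+1)) x))
        = ((m₂ * m₁) ^ j) ((m₂ * m₁) (m₂ (((m₂ * m₁) ^ (j+1)) x))) := by
          rw [pow_succ]; simp [Equiv.Perm.mul_apply]
      _ = ((m₂ * m₁) ^ j) ((m₂ * m₁) (m₂ ((m₂ * m₁) (((m₂ * m₁) ^ j) x)))) := by
          rw [pow_succ']; simp [Equiv.Perm.mul_apply]
      _ = ((m₂ * m₁) ^ j) (m₂ (((m₂ * m₁) ^ j) x)) := by rw [base]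
      _ = m₂ x := ih

/-- No power of σ = m₂m₁ sends v to m₁ v (fixed-point-free involutions). -/
lemma lemA (m₁ m₂ : Equiv.Perm V) (h₁ : ∀ v, m₁ (m₁ v) = v)
    (h₂ : ∀ v, m₂ (m₂ v) = v) (hf₁ : ∀ v, m₁ v ≠ v) (hf₂ : ∀ v, m₂ v ≠ v)
    (k : ℕ) (v : V) : ((m₂ * m₁) ^ k) v ≠ m₁ v := by
  set σ := m₂ * m₁ with hσ
  intro h
  rcases Nat.even_or_odd k with ⟨j, hj⟩ | ⟨j, hj⟩
  · apply hf₁ ((σ ^ j) v)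
    apply (σ ^ j).injective
    rw [conj1 m₁ m₂ h₁ h₂ j v, ← Equiv.Perm.mul_apply, ← pow_add, ← hj, ← h]
  · have h' : (σ ^ (k + 1)) v = m₂ v := by
      have e : (σ ^ (k+1)) v = σ (m₁ v) := by
        rw [pow_succ']
        simp [Equiv.Perm.mul_apply, h]
      rw [e, hσ]
      simp [Equiv.Perm.mul_apply, h₁]
    apply hf₂ ((σ ^ (j + 1)) v)
    apply (σ ^ (j + 1)).injective
    rw [conj2 m₁ m₂ h₁ h₂ (j+1) v, ← h', ← Equiv.Perm.mul_apply, ← pow_add]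
    congr 2
    omega

lemma exists_coloring (m₁ m₂ : Equiv.Perm V) (h₁ : ∀ v, m₁ (m₁ v) = v)
    (h₂ : ∀ v, m₂ (m₂ v) = v) (hf₁ : ∀ v, m₁ v ≠ v) (hf₂ : ∀ v, m₂ v ≠ v) :
    ∃ c : V → Bool, (∀ v, c (m₁ v) = !c v) ∧ (∀ v, c (m₂ v) = !c v) := by
  classical
  set σ := m₂ * m₁ with hσ
  have hnsc : ∀ v, ¬ σ.SameCycle v (m₁ v) := by
    intro v hsc
    obtain ⟨i, _, hpow⟩ := hsc.exists_pow_eq'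
    exact lemA m₁ m₂ h₁ h₂ hf₁ hf₂ i v hpow
  let f : V → ℕ := fun v => (Fintype.equivFin V v : ℕ)
  have hfinj : Function.Injective f := by
    intro a b hab
    exact (Fintype.equivFin V).injective (Fin.val_injective hab)
  let orb : V → Finset V := fun v => univ.filter (fun w => σ.SameCycle v w)
  have horbmem : ∀ v, v ∈ orb v := by
    intro v; simp [orb, Equiv.Perm.SameCycle.refl]
  have horbeq : ∀ {v w}, σ.SameCycle v w → orb v = orb w := by
    intro v w hvw
    ext x
    simp only [orb, mem_filter, mem_univ, true_and]
    exact ⟨fun h => hvw.symm.trans h, fun h => hvw.trans h⟩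
  let rep : V → ℕ := fun v => ((orb v).image f).min' ⟨f v, mem_image_of_mem f (horbmem v)⟩
  have hrep_eq : ∀ {v w}, σ.SameCycle v w → rep v = rep w := by
    intro v w hvw
    simp only [rep, horbeq hvw]
  have hrep_ne : ∀ {v w}, ¬ σ.SameCycle v w → rep v ≠ rep w := by
    intro v w hvw hne
    have hx := min'_mem ((orb v).image f) ⟨f v, mem_image_of_mem f (horbmem v)⟩
    have hy := min'_mem ((orb w).image f) ⟨f w, mem_image_of_mem f (horbmem w)⟩
    rw [show ((orb v).image f).min' _ = rep v from rfl] at hx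
    rw [show ((orb w).image f).min' _ = rep w from rfl] at hy
    obtain ⟨x, hxmem, hxf⟩ := mem_image.mp hx
    obtain ⟨y, hymem, hyf⟩ := mem_image.mp hy
    have : x = y := hfinj (by rw [hxf, hyf, hne])
    subst this
    simp only [orb, mem_filter, mem_univ, true_and] at hxmem hymem
    exact hvw (hxmem.trans hymem.symm)
  refine ⟨fun v => decide (rep v < rep (m₁ v)), ?_, ?_⟩
  · intro v
    have hne : rep v ≠ rep (m₁ v) := hrep_ne (hnsc v)
    simp only [h₁ v]
    by_cases hlt : rep v < rep (m₁ v) <;> simp [hlt] <;> omega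
  · intro v
    have e1 : rep (m₂ v) = rep (m₁ v) := by
      apply (hrep_eq _).symm
      exact ⟨1, by simp [hσ, Equiv.Perm.mul_apply, h₁]⟩
    have e2 : rep (m₁ (m₂ v)) = rep v := by
      apply (hrep_eq _).symm
      refine ⟨-1, ?_⟩
      have : σ (m₁ (m₂ v)) = v := by simp [hσ, Equiv.Perm.mul_apply, h₁, h₂]
      simp only [zpow_neg, zpow_one]
      exact (Equiv.eq_symm_apply σ).mpr this |>.symm
    have hne : rep v ≠ rep (m₁ v) := hrep_ne (hnsc v)
    simp only [e1, e2]
    by_cases hlt : rep v < rep (m₁ v) <;> simp [hlt] <;> omega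

/-- the color classes are equal-sized. -/
lemma coloring_card (m : Equiv.Perm V) (hm : ∀ v, m (m v) = v)
    (c : V → Bool) (hc : ∀ v, c (m v) = !c v) (t : Bool) :
    2 * (univ.filter (fun v => c v = t)).card = Fintype.card V := by
  classical
  have hbij : (univ.filter (fun v => c v = t)).card
      = (univ.filter (fun v => c v = !t)).card := by
    apply Finset.card_bij' (fun a _ => m a) (fun a _ => m a)
    · intro a ha
      simp only [mem_filter, mem_univ, true_and] at ha ⊢
      rw [hc a, ha]
    · intro a ha
      simp only [mem_filter, mem_univ, true_and] at ha ⊢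
      rw [hc a, ha, Bool.not_not]
    · intro a _; exact hm a
    · intro a _; exact hm a
  have hsplit := Finset.card_filter_add_card_filter_not
    (s := (univ : Finset V)) (p := fun v => c v = t)
  simp only [card_univ] at hsplit
  have : (univ.filter (fun v => ¬ c v = t)).card
      = (univ.filter (fun v => c v = !t)).card := by
    congr 1
    apply filter_congr
    intro x _
    cases t <;> cases hcx : c x <;> simp
  omega



lemma sd_le (F₁ F₂ : SimpleGraph V) (S : Finset V)
    (h : ∀ v ∉ S, (∃ u ∈ S, F₁.Adj v u) ∧ (∃ u ∈ S, F₂.Adj v u)) :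
    simDomNum ![F₁, F₂] ≤ S.card := by
  apply Nat.sInf_le
  refine ⟨S, ?_, rfl⟩
  intro i v hv
  fin_cases i
  · simpa using (h v hv).1
  · simpa using (h v hv).2

lemma even_bound (F₁ F₂ : SimpleGraph V) (m₁ m₂ : V → V)
    (i₁ : Function.Involutive m₁) (i₂ : Function.Involutive m₂)
    (hf₁ : ∀ v, m₁ v ≠ v) (hf₂ : ∀ v, m₂ v ≠ v)
    (ha₁ : ∀ v, F₁.Adj v (m₁ v)) (ha₂ : ∀ v, F₂.Adj v (m₂ v)) :
    simDomNum ![F₁, F₂] ≤ Fintype.card V / 2 := by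
  classical
  obtain ⟨c, hc₁, hc₂⟩ := exists_coloring (i₁.toPerm m₁) (i₂.toPerm m₂)
    (by simpa [Function.Involutive.coe_toPerm] using (fun v => i₁ v))
    (by simpa [Function.Involutive.coe_toPerm] using (fun v => i₂ v))
    (by simpa [Function.Involutive.coe_toPerm] using hf₁)
    (by simpa [Function.Involutive.coe_toPerm] using hf₂)
  simp only [Function.Involutive.coe_toPerm] at hc₁ hc₂
  set S := univ.filter (fun v => c v = true) with hS
  have hcard : 2 * S.card = Fintype.card V :=
    coloring_card (i₁.toPerm m₁) (by simpa [Function.Involutive.coe_toPerm] using (fun v => i₁ v)) c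
      (by simpa [Function.Involutive.coe_toPerm] using hc₁) true
  have hle : simDomNum ![F₁, F₂] ≤ S.card := by
    apply sd_le
    intro v hv
    have hcv : c v = false := by
      simp only [hS, mem_filter, mem_univ, true_and] at hv
      simpa using hv
    constructor
    · exact ⟨m₁ v, by simp [hS, hc₁ v, hcv], ha₁ v⟩
    · exact ⟨m₂ v, by simp [hS, hc₂ v, hcv], ha₂ v⟩
  omega


lemma odd_bound (F₁ F₂ : SimpleGraph V) (u₁ u₂ : V) (m₁ m₂ : V → V)
    (i₁ : Function.Involutive m₁) (i₂ : Function.Involutive m₂)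
    (hfix₁ : ∀ v, m₁ v = v ↔ v = u₁) (hfix₂ : ∀ v, m₂ v = v ↔ v = u₂)
    (ha₁ : ∀ v, v ≠ u₁ → F₁.Adj v (m₁ v)) (ha₂ : ∀ v, v ≠ u₂ → F₂.Adj v (m₂ v)) :
    simDomNum ![F₁, F₂] ≤ (Fintype.card V + 1) / 2 := by
  classical
  set g₁ : V ⊕ Unit → V ⊕ Unit :=
    Sum.elim (fun v => if v = u₁ then Sum.inr () else Sum.inl (m₁ v))
      (fun _ => Sum.inl u₁) with hg₁
  set g₂ : V ⊕ Unit → V ⊕ Unit :=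
    Sum.elim (fun v => if v = u₂ then Sum.inr () else Sum.inl (m₂ v))
      (fun _ => Sum.inl u₂) with hg₂
  have hne₁ : ∀ v : V, v ≠ u₁ → m₁ v ≠ u₁ := by
    intro v hv hc
    apply hv
    have : m₁ (m₁ v) = m₁ u₁ := by rw [hc]
    rw [i₁ v, (hfix₁ u₁).mpr rfl] at this
    exact this
  have hne₂ : ∀ v : V, v ≠ u₂ → m₂ v ≠ u₂ := by
    intro v hv hc
    apply hv
    have : m₂ (m₂ v) = m₂ u₂ := by rw [hc]
    rw [i₂ v, (hfix₂ u₂).mpr rfl] at this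
    exact this
  have I₁ : Function.Involutive g₁ := by
    intro w
    rcases w with v | u
    · by_cases hv : v = u₁
      · subst hv; simp [hg₁]
      · simp only [hg₁, Sum.elim_inl, if_neg hv, if_neg (hne₁ v hv), i₁ v]
    · cases u; simp [hg₁]
  have I₂ : Function.Involutive g₂ := by
    intro w
    rcases w with v | u
    · by_cases hv : v = u₂
      · subst hv; simp [hg₂]
      · simp only [hg₂, Sum.elim_inl, if_neg hv, if_neg (hne₂ v hv), i₂ v]
    · cases u; simp [hg₂]
  have Hf₁ : ∀ w, g₁ w ≠ w := by
    intro w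
    rcases w with v | u
    · by_cases hv : v = u₁
      · simp [hg₁, hv]
      · have hmv : m₁ v ≠ v := fun h => hv ((hfix₁ v).mp h)
        simp [hg₁, hv, hmv]
    · simp [hg₁]
  have Hf₂ : ∀ w, g₂ w ≠ w := by
    intro w
    rcases w with v | u
    · by_cases hv : v = u₂
      · simp [hg₂, hv]
      · have hmv : m₂ v ≠ v := fun h => hv ((hfix₂ v).mp h)
        simp [hg₂, hv, hmv]
    · simp [hg₂]
  obtain ⟨c, hc₁, hc₂⟩ := exists_coloring (I₁.toPerm g₁) (I₂.toPerm g₂)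
    (fun v => by rw [Function.Involutive.coe_toPerm]; exact I₁ v)
    (fun v => by rw [Function.Involutive.coe_toPerm]; exact I₂ v)
    (fun v => by rw [Function.Involutive.coe_toPerm]; exact Hf₁ v)
    (fun v => by rw [Function.Involutive.coe_toPerm]; exact Hf₂ v)
  simp only [Function.Involutive.coe_toPerm] at hc₁ hc₂
  set b := c (Sum.inr ()) with hb
  set S := univ.filter (fun v : V => c (Sum.inl v) = !b) with hS
  have hu₁ : c (Sum.inl u₁) = !b := by
    have : (Sum.inl u₁ : V ⊕ Unit) = g₁ (Sum.inr ()) := by simp [hg₁]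
    rw [this, hc₁]
  have hu₂ : c (Sum.inl u₂) = !b := by
    have : (Sum.inl u₂ : V ⊕ Unit) = g₂ (Sum.inr ()) := by simp [hg₂]
    rw [this, hc₂]
  have hcard : 2 * S.card = Fintype.card V + 1 := by
    have hC := coloring_card (I₁.toPerm g₁)
      (fun v => by rw [Function.Involutive.coe_toPerm]; exact I₁ v) c
      (fun v => by rw [Function.Involutive.coe_toPerm]; exact hc₁ v) (!b)
    rw [Fintype.card_sum, Fintype.card_unit] at hC
    have hSC : S.card = (univ.filter (fun w : V ⊕ Unit => c w = !b)).card := by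
      apply Finset.card_bij (fun v _ => Sum.inl v)
      · intro a ha
        simp only [hS, mem_filter, mem_univ, true_and] at ha ⊢
        exact ha
      · intro a _ a' _ h
        exact Sum.inl_injective h
      · intro w hw
        simp only [mem_filter, mem_univ, true_and] at hw
        rcases w with v | u
        · exact ⟨v, by simp [hS, hw], rfl⟩
        · cases u
          rw [← hb] at hw
          simp at hw
    omega
  have hle : simDomNum ![F₁, F₂] ≤ S.card := by
    apply sd_le
    intro v hv
    have hcv : c (Sum.inl v) = b := by
      simp only [hS, mem_filter, mem_univ, true_and] at hv
      rcases Bool.eq_false_or_eq_true (c (Sum.inl v)) with h | h <;>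
        rcases Bool.eq_false_or_eq_true b with h' | h' <;> simp_all
    have hvne₁ : v ≠ u₁ := by
      intro h; rw [h, hu₁] at hcv; simp at hcv
    have hvne₂ : v ≠ u₂ := by
      intro h; rw [h, hu₂] at hcv; simp at hcv
    constructor
    · refine ⟨m₁ v, ?_, ha₁ v hvne₁⟩
      have : c (Sum.inl (m₁ v)) = !b := by
        have e : (Sum.inl (m₁ v) : V ⊕ Unit) = g₁ (Sum.inl v) := by
          simp [hg₁, if_neg hvne₁]
        rw [e, hc₁, hcv]
      simp [hS, this]
    · refine ⟨m₂ v, ?_, ha₂ v hvne₂⟩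
      have : c (Sum.inl (m₂ v)) = !b := by
        have e : (Sum.inl (m₂ v) : V ⊕ Unit) = g₂ (Sum.inl v) := by
          simp [hg₂, if_neg hvne₂]
        rw [e, hc₂, hcv]
      simp [hS, this]
  omega


def psE {n : ℕ} (hn : n % 2 = 0) (v : Fin n) : Fin n :=
  if h : v.val % 2 = 0 then ⟨v.val + 1, by have := v.isLt; omega⟩
  else ⟨v.val - 1, by have := v.isLt; omega⟩

lemma psE_val_eq {n : ℕ} (hn : n % 2 = 0) (v : Fin n) :
    (psE hn v).val = if v.val % 2 = 0 then v.val + 1 else v.val - 1 := by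
  unfold psE
  split_ifs <;> rfl

lemma psE_val {n : ℕ} (hn : n % 2 = 0) (v : Fin n) :
    (psE hn v).val = v.val + 1 ∨ (psE hn v).val + 1 = v.val := by
  rw [psE_val_eq]
  split_ifs with h <;> omega

lemma psE_invol {n : ℕ} (hn : n % 2 = 0) : Function.Involutive (psE hn) := by
  intro v
  apply Fin.ext
  rw [psE_val_eq, psE_val_eq]
  split_ifs <;> omega

lemma psE_ne {n : ℕ} (hn : n % 2 = 0) (v : Fin n) : psE hn v ≠ v := by
  intro h
  have hv := congrArg Fin.val h
  rcases psE_val hn v with h' | h' <;> omega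

def psO {n : ℕ} (hn : n % 2 = 1) (v : Fin n) : Fin n :=
  if h : v.val % 2 = 1 then ⟨v.val + 1, by have := v.isLt; omega⟩
  else if v.val = 0 then v else ⟨v.val - 1, by have := v.isLt; omega⟩

lemma psO_val_eq {n : ℕ} (hn : n % 2 = 1) (v : Fin n) :
    (psO hn v).val = if v.val % 2 = 1 then v.val + 1
      else if v.val = 0 then v.val else v.val - 1 := by
  unfold psO
  split_ifs <;> rfl

lemma psO_val {n : ℕ} (hn : n % 2 = 1) (v : Fin n) (hv : v.val ≠ 0) :
    (psO hn v).val = v.val + 1 ∨ (psO hn v).val + 1 = v.val := by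
  rw [psO_val_eq]
  split_ifs <;> omega

lemma psO_invol {n : ℕ} (hn : n % 2 = 1) : Function.Involutive (psO hn) := by
  intro v
  apply Fin.ext
  rw [psO_val_eq, psO_val_eq]
  split_ifs <;> first | omega | exact ‹False›.elim

lemma psO_fix {n : ℕ} (hn : n % 2 = 1) (v : Fin n) : psO hn v = v ↔ v.val = 0 := by
  constructor
  · intro h
    have hv := congrArg Fin.val h
    rw [psO_val_eq] at hv
    by_contra hne
    split_ifs at hv <;> omega
  · intro h
    apply Fin.ext
    rw [psO_val_eq]
    split_ifs <;> omega

lemma cycle_adj_of_val {n : ℕ} (hn : 2 ≤ n) {u v : Fin n}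
    (h : u.val = v.val + 1 ∨ v.val = u.val + 1) :
    (SimpleGraph.cycleGraph n).Adj u v := by
  rw [SimpleGraph.cycleGraph_adj']
  have hu := u.isLt
  have hv := v.isLt
  have key : ∀ a b : Fin n, a.val = b.val + 1 → (a - b).val = 1 := by
    intro a b hab
    have hb := b.isLt
    rw [Fin.sub_def]
    simp only
    have e : (n - b.val) + a.val = n + 1 := by omega
    rw [e, Nat.add_mod_left, Nat.mod_eq_of_lt (by omega)]
  rcases h with h | h
  · exact Or.inl (key u v h)
  · exact Or.inr (key v u h)

lemma path_adj_of_val {n : ℕ} {u v : Fin n}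
    (h : u.val = v.val + 1 ∨ v.val = u.val + 1) :
    (SimpleGraph.pathGraph n).Adj u v := by
  rw [SimpleGraph.pathGraph_adj]
  omega


lemma iso_invol {W : Type*} {F : SimpleGraph V} {G : SimpleGraph W} (e : F ≃g G)
    {p : W → W} (hp : Function.Involutive p) :
    Function.Involutive (fun v => e.symm (p (e v))) := by
  intro v
  simp only [RelIso.apply_symm_apply, hp (e v), RelIso.symm_apply_apply]

lemma iso_eq_iff {W : Type*} {F : SimpleGraph V} {G : SimpleGraph W} (e : F ≃g G)
    {p : W → W} (v : V) : e.symm (p (e v)) = v ↔ p (e v) = e v := by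
  constructor
  · intro h
    have := congrArg e h
    rwa [RelIso.apply_symm_apply] at this
  · intro h
    rw [h, RelIso.symm_apply_apply]

lemma iso_adj_pt {W : Type*} {F : SimpleGraph V} {G : SimpleGraph W} (e : F ≃g G)
    {p : W → W} (v : V) (hadj : G.Adj (e v) (p (e v))) :
    F.Adj v (e.symm (p (e v))) := by
  apply e.map_adj_iff.mp
  rwa [RelIso.apply_symm_apply]

end SDH

theorem stmt15 {V : Type*} [Fintype V] {n : ℕ} (hn : Fintype.card V = n)
    (F₁ F₂ : SimpleGraph V) :
    (4 ≤ n → Even n →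
      ((Nonempty (F₁ ≃g SimpleGraph.cycleGraph n) ∧
          Nonempty (F₂ ≃g SimpleGraph.cycleGraph n)) →
        simDomNum ![F₁, F₂] ≤ n / 2) ∧
      ((Nonempty (F₁ ≃g SimpleGraph.pathGraph n) ∧
          Nonempty (F₂ ≃g SimpleGraph.pathGraph n)) →
        simDomNum ![F₁, F₂] ≤ n / 2)) ∧
    (5 ≤ n → Odd n →
      (Nonempty (F₁ ≃g SimpleGraph.cycleGraph n) ∧
          Nonempty (F₂ ≃g SimpleGraph.cycleGraph n)) →
        simDomNum ![F₁, F₂] ≤ (n + 1) / 2) := by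
  subst hn
  constructor
  · intro h4 heven
    have h2 : Fintype.card V % 2 = 0 := Nat.even_iff.mp heven
    constructor
    · rintro ⟨⟨e₁⟩, ⟨e₂⟩⟩
      exact SDH.even_bound F₁ F₂
        (fun v => e₁.symm (SDH.psE h2 (e₁ v))) (fun v => e₂.symm (SDH.psE h2 (e₂ v)))
        (SDH.iso_invol e₁ (SDH.psE_invol h2)) (SDH.iso_invol e₂ (SDH.psE_invol h2))
        (fun v h => SDH.psE_ne h2 (e₁ v) ((SDH.iso_eq_iff e₁ v).mp h))
        (fun v h => SDH.psE_ne h2 (e₂ v) ((SDH.iso_eq_iff e₂ v).mp h))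
        (fun v => SDH.iso_adj_pt e₁ v (by
          rcases SDH.psE_val h2 (e₁ v) with h | h
          · exact SDH.cycle_adj_of_val (by omega) (Or.inr h)
          · exact SDH.cycle_adj_of_val (by omega) (Or.inl h.symm)))
        (fun v => SDH.iso_adj_pt e₂ v (by
          rcases SDH.psE_val h2 (e₂ v) with h | h
          · exact SDH.cycle_adj_of_val (by omega) (Or.inr h)
          · exact SDH.cycle_adj_of_val (by omega) (Or.inl h.symm)))
    · rintro ⟨⟨e₁⟩, ⟨e₂⟩⟩
      exact SDH.even_bound F₁ F₂
        (fun v => e₁.symm (SDH.psE h2 (e₁ v))) (fun v => e₂.symm (SDH.psE h2 (e₂ v)))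
        (SDH.iso_invol e₁ (SDH.psE_invol h2)) (SDH.iso_invol e₂ (SDH.psE_invol h2))
        (fun v h => SDH.psE_ne h2 (e₁ v) ((SDH.iso_eq_iff e₁ v).mp h))
        (fun v h => SDH.psE_ne h2 (e₂ v) ((SDH.iso_eq_iff e₂ v).mp h))
        (fun v => SDH.iso_adj_pt e₁ v (by
          rcases SDH.psE_val h2 (e₁ v) with h | h
          · exact SDH.path_adj_of_val (Or.inr h)
          · exact SDH.path_adj_of_val (Or.inl h.symm)))
        (fun v => SDH.iso_adj_pt e₂ v (by
          rcases SDH.psE_val h2 (e₂ v) with h | h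
          · exact SDH.path_adj_of_val (Or.inr h)
          · exact SDH.path_adj_of_val (Or.inl h.symm)))
  · intro h5 hodd
    rintro ⟨⟨e₁⟩, ⟨e₂⟩⟩
    have h2 : Fintype.card V % 2 = 1 := Nat.odd_iff.mp hodd
    have hzero : (0 : ℕ) < Fintype.card V := by omega
    set z : Fin (Fintype.card V) := ⟨0, hzero⟩ with hz
    have hfix : ∀ (e : F₁ ≃g SimpleGraph.cycleGraph (Fintype.card V)) (v : V),
        True := fun _ _ => trivial
    apply SDH.odd_bound F₁ F₂ (e₁.symm z) (e₂.symm z)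
      (fun v => e₁.symm (SDH.psO h2 (e₁ v))) (fun v => e₂.symm (SDH.psO h2 (e₂ v)))
      (SDH.iso_invol e₁ (SDH.psO_invol h2)) (SDH.iso_invol e₂ (SDH.psO_invol h2))
    · intro v
      rw [SDH.iso_eq_iff e₁ v, SDH.psO_fix h2 (e₁ v)]
      constructor
      · intro h
        have : e₁ v = z := Fin.ext h
        rw [← this, RelIso.symm_apply_apply]
      · intro h
        rw [h, RelIso.apply_symm_apply]
    · intro v
      rw [SDH.iso_eq_iff e₂ v, SDH.psO_fix h2 (e₂ v)]
      constructor
      · intro h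
        have : e₂ v = z := Fin.ext h
        rw [← this, RelIso.symm_apply_apply]
      · intro h
        rw [h, RelIso.apply_symm_apply]
    · intro v hv
      apply SDH.iso_adj_pt e₁ v
      have hval : (e₁ v).val ≠ 0 := by
        intro h0
        apply hv
        have : e₁ v = z := Fin.ext h0
        rw [← this, RelIso.symm_apply_apply]
      rcases SDH.psO_val h2 (e₁ v) hval with h | h
      · exact SDH.cycle_adj_of_val (by omega) (Or.inr h)
      · exact SDH.cycle_adj_of_val (by omega) (Or.inl h.symm)
    · intro v hv
      apply SDH.iso_adj_pt e₂ v
      have hval : (e₂ v).val ≠ 0 := by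
        intro h0
        apply hv
        have : e₂ v = z := Fin.ext h0
        rw [← this, RelIso.symm_apply_apply]
      rcases SDH.psO_val h2 (e₂ v) hval with h | h
      · exact SDH.cycle_adj_of_val (by omega) (Or.inr h)
      · exact SDH.cycle_adj_of_val (by omega) (Or.inl h.symm)
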